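/- arXiv:1401.8243 — 4 statements merged into one kernel-verified Lean document; each statement's English description precedes it below -/
import Mathlib

section
/- Let d_A, d_B be positive natural numbers, let {v_i} be an orthonormal basis of ℂ^{d_A}, let λ_1, …, λ_{d_A} be pairwise distinct complex numbers of modulus 1, and set U = Σ_i λ_i (v_i v_iᴴ) (a unitary matrix with fully nondegenerate spectrum). If ρ is a positive semidefinite (d_A·d_B) × (d_A·d_B) complex matrix satisfying (U ⊗ₖ I_{d_B}) ρ = ρ (U ⊗ₖ I_{d_B}), then there exist positive semidefinite d_B × d_B matrices L_i such that ρ = Σ_i (v_i v_iᴴ) ⊗ₖ L_i; in particular, if ρ is a density matrix it is classical-quantum. -/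
open Matrix Kronecker
open scoped ComplexOrder

theorem commutes_with_nondegenerate_local_unitary_implies_classicalQuantum
    (dA dB : ℕ) (hdA : 0 < dA) (hdB : 0 < dB)
    (v : Fin dA → Fin dA → ℂ)
    (hv : ∀ i j, star (v i) ⬝ᵥ v j = if i = j then 1 else 0)
    (lam : Fin dA → ℂ) (hmod : ∀ i, ‖lam i‖ = 1)
    (hdist : Function.Injective lam)
    (U : Matrix (Fin dA) (Fin dA) ℂ)
    (hU : U = ∑ i, lam i • Matrix.vecMulVec (v i) (star (v i)))
    (ρ : Matrix (Fin dA × Fin dB) (Fin dA × Fin dB) ℂ)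
    (hρ : ρ.PosSemidef)
    (hcomm : (U ⊗ₖ (1 : Matrix (Fin dB) (Fin dB) ℂ)) * ρ
      = ρ * (U ⊗ₖ (1 : Matrix (Fin dB) (Fin dB) ℂ))) :
    ∃ L : Fin dA → Matrix (Fin dB) (Fin dB) ℂ,
      (∀ i, (L i).PosSemidef) ∧
      ρ = ∑ i, Matrix.vecMulVec (v i) (star (v i)) ⊗ₖ L i := by
  classical
  set P : Fin dA → Matrix (Fin dA) (Fin dA) ℂ :=
    fun i => Matrix.vecMulVec (v i) (star (v i)) with hPdef
  -- orthogonality of projectors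
  have hPP : ∀ i j, P i * P j = if i = j then P i else 0 := by
    intro i j
    ext x y
    simp only [hPdef, Matrix.mul_apply, Matrix.vecMulVec_apply, Pi.star_apply]
    have : ∑ z, v i x * star (v i z) * (v j z * star (v j y))
        = (v i x * star (v j y)) * (star (v i) ⬝ᵥ v j) := by
      simp only [dotProduct, Finset.mul_sum, Pi.star_apply]
      congr 1; ext z; ring
    rw [this, hv i j]
    by_cases h : i = j <;> simp [h, Matrix.vecMulVec_apply]
  -- completeness : ∑ P = 1
  have hPone : ∑ i, P i = 1 := by
    set V : Matrix (Fin dA) (Fin dA) ℂ := Matrix.of v with hV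
    have h1 : V * Vᴴ = 1 := by
      ext i j
      have hvji := hv j i
      simp only [dotProduct, Pi.star_apply] at hvji
      simp only [Matrix.mul_apply, Matrix.conjTranspose_apply, hV, Matrix.of_apply]
      calc ∑ x, v i x * star (v j x) = ∑ x, star (v j x) * v i x := by
            exact Finset.sum_congr rfl fun x _ => mul_comm _ _
        _ = if j = i then 1 else 0 := hvji
        _ = (1 : Matrix (Fin dA) (Fin dA) ℂ) i j := by
            rw [Matrix.one_apply]
            rcases eq_or_ne i j with h | h
            · simp [h]
            · simp [h, h.symm]
    have h2 : Vᴴ * V = 1 := mul_eq_one_comm.mp h1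
    ext x y
    have hyx := congrArg (fun M => M y x) h2
    simp only [Matrix.mul_apply, Matrix.conjTranspose_apply, hV, Matrix.of_apply] at hyx
    simp only [Matrix.sum_apply, hPdef, Matrix.vecMulVec_apply, Pi.star_apply]
    calc ∑ i, v i x * star (v i y) = ∑ i, star (v i y) * v i x := by
          exact Finset.sum_congr rfl fun i _ => mul_comm _ _
      _ = (1 : Matrix (Fin dA) (Fin dA) ℂ) y x := hyx
      _ = (1 : Matrix (Fin dA) (Fin dA) ℂ) x y := by
          rw [Matrix.one_apply, Matrix.one_apply]
          rcases eq_or_ne x y with h | h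
          · simp [h]
          · simp [h, h.symm]
  -- eigen relations
  have hPU : ∀ i, P i * U = lam i • P i := by
    intro i
    rw [hU, Finset.mul_sum]
    rw [Finset.sum_eq_single i]
    · rw [Matrix.mul_smul, hPP, if_pos rfl]
    · intro j _ hj
      rw [Matrix.mul_smul, hPP, if_neg (Ne.symm hj), smul_zero]
    · simp
  have hUP : ∀ i, U * P i = lam i • P i := by
    intro i
    rw [hU, Finset.sum_mul]
    rw [Finset.sum_eq_single i]
    · rw [Matrix.smul_mul, hPP, if_pos rfl]
    · intro j _ hj
      rw [Matrix.smul_mul, hPP, if_neg hj, smul_zero]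
    · simp
  set Q : Fin dA → Matrix (Fin dA × Fin dB) (Fin dA × Fin dB) ℂ :=
    fun i => P i ⊗ₖ (1 : Matrix (Fin dB) (Fin dB) ℂ) with hQdef
  -- off-diagonal blocks vanish
  have hoff : ∀ i j, i ≠ j → Q i * ρ * Q j = 0 := by
    intro i j hij
    have key : lam i • (Q i * ρ * Q j) = lam j • (Q i * ρ * Q j) := by
      have h1 : Q i * ((U ⊗ₖ (1 : Matrix (Fin dB) (Fin dB) ℂ)) * ρ) * Q j
          = lam i • (Q i * ρ * Q j) := by
        rw [← Matrix.mul_assoc (Q i), hQdef]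
        simp only [← Matrix.mul_kronecker_mul, Matrix.mul_one, hPU i,
          Matrix.smul_kronecker]
        simp [Matrix.smul_mul]
      have h2 : Q i * (ρ * (U ⊗ₖ (1 : Matrix (Fin dB) (Fin dB) ℂ))) * Q j
          = lam j • (Q i * ρ * Q j) := by
        rw [Matrix.mul_assoc, Matrix.mul_assoc, hQdef]
        simp only [← Matrix.mul_kronecker_mul, Matrix.one_mul, hUP j,
          Matrix.smul_kronecker]
        simp [Matrix.mul_smul, Matrix.mul_assoc]
      rw [← h1, ← h2, hcomm]
    have hsub : (lam i - lam j) • (Q i * ρ * Q j) = 0 := by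
      rw [sub_smul, key, sub_self]
    have hne : lam i - lam j ≠ 0 := sub_ne_zero.mpr (fun h => hij (hdist h))
    exact (smul_eq_zero.mp hsub).resolve_left hne
  -- sum of Q is 1
  have hQone : ∑ i, Q i = 1 := by
    have : (∑ i, Q i) = (∑ i, P i) ⊗ₖ (1 : Matrix (Fin dB) (Fin dB) ℂ) := by
      ext p q
      simp [hQdef, Matrix.sum_apply, Matrix.kroneckerMap_apply, Finset.sum_mul]
    rw [this, hPone, Matrix.one_kronecker_one]
  -- decomposition
  have hdecomp : ρ = ∑ i, Q i * ρ * Q i := by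
    calc ρ = (∑ i, Q i) * ρ * (∑ j, Q j) := by rw [hQone, Matrix.one_mul, Matrix.mul_one]
    _ = ∑ i, ∑ j, Q i * ρ * Q j := by
        simp only [Finset.sum_mul, Finset.mul_sum]
        rw [Finset.sum_comm]
    _ = ∑ i, Q i * ρ * Q i := by
        refine Finset.sum_congr rfl fun i _ => ?_
        exact Finset.sum_eq_single i (fun j _ hj => hoff i j (Ne.symm hj))
          (fun h => absurd (Finset.mem_univ i) h)
  -- the local matrices
  set M : Fin dA → Matrix (Fin dA × Fin dB) (Fin dB) ℂ :=
    fun i => Matrix.of (fun p b => v i p.1 * if p.2 = b then 1 else 0) with hM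
  refine ⟨fun i => (M i)ᴴ * ρ * (M i), fun i => hρ.conjTranspose_mul_mul_same (M i), ?_⟩
  have hblock : ∀ i : Fin dA, Q i * ρ * Q i = P i ⊗ₖ ((M i)ᴴ * ρ * (M i)) := by
    intro i
    ext ⟨x, a⟩ ⟨y, b⟩
    simp only [Matrix.mul_apply, Matrix.kroneckerMap_apply, Matrix.conjTranspose_apply,
      hM, Matrix.of_apply, hPdef, hQdef, Matrix.vecMulVec_apply, Pi.star_apply,
      Matrix.one_apply, Fintype.sum_prod_type, star_mul', apply_ite (star : ℂ → ℂ), star_one, star_zero,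
      mul_ite, ite_mul, mul_one, mul_zero, zero_mul, one_mul,
      Finset.sum_ite_eq, Finset.sum_ite_eq', Finset.mem_univ, if_true,
      Finset.mul_sum, Finset.sum_mul]
    exact Finset.sum_congr rfl fun y' _ => Finset.sum_congr rfl fun x' _ => by ring
  conv_lhs => rw [hdecomp]
  exact Finset.sum_congr rfl fun i _ => hblock i
end

section
/- Let d be a positive natural number and let ρ be a density matrix on ℂ² ⊗ ℂ^d. Then there exists a traceless 2 × 2 unitary matrix U with (U ⊗ₖ I_d) ρ (U ⊗ₖ I_d)ᴴ = ρ if and only if ρ is classical-quantum. -/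
open Matrix Kronecker
open scoped ComplexOrder

/-- A density matrix on `ℂ² ⊗ ℂ^d` is classical-quantum if it is of the form
`Σ_i (v_i v_iᴴ) ⊗ₖ L_i` for an orthonormal basis `v` of `ℂ²` and PSD matrices `L_i`. -/
def IsClassicalQuantum (d : ℕ) (ρ : Matrix (Fin 2 × Fin d) (Fin 2 × Fin d) ℂ) : Prop :=
  ∃ (v : Fin 2 → Fin 2 → ℂ) (L : Fin 2 → Matrix (Fin d) (Fin d) ℂ),
    (∀ i j, star (v i) ⬝ᵥ v j = if i = j then 1 else 0) ∧
    (∀ i, (L i).PosSemidef) ∧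
    ρ = ∑ i, Matrix.vecMulVec (v i) (star (v i)) ⊗ₖ L i

lemma kronCT {d : ℕ} (A : Matrix (Fin 2) (Fin 2) ℂ) (B : Matrix (Fin d) (Fin d) ℂ) :
    (A ⊗ₖ B)ᴴ = Aᴴ ⊗ₖ Bᴴ := by
  ext ⟨i,k⟩ ⟨j,l⟩
  simp [conjTranspose_apply, kroneckerMap_apply, mul_comm]

lemma vmv_mul_vmv (a b c e : Fin 2 → ℂ) :
    vecMulVec a b * vecMulVec c e = (b ⬝ᵥ c) • vecMulVec a e := by
  ext i j
  simp only [mul_apply, vecMulVec_apply, Matrix.smul_apply, smul_eq_mul, dotProduct, Finset.sum_mul]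
  exact Finset.sum_congr rfl fun r _ => by ring

lemma vmv_ct (a : Fin 2 → ℂ) : (vecMulVec a (star a))ᴴ = vecMulVec a (star a) := by
  ext i j
  simp [conjTranspose_apply, vecMulVec_apply, mul_comm]

lemma backward_dir (d : ℕ) (ρ : Matrix (Fin 2 × Fin d) (Fin 2 × Fin d) ℂ)
    (v : Fin 2 → Fin 2 → ℂ) (L : Fin 2 → Matrix (Fin d) (Fin d) ℂ)
    (horth : ∀ i j, star (v i) ⬝ᵥ v j = if i = j then 1 else 0)
    (hdec : ρ = ∑ i, Matrix.vecMulVec (v i) (star (v i)) ⊗ₖ L i) :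
    ∃ U : Matrix (Fin 2) (Fin 2) ℂ, Uᴴ * U = 1 ∧ U.trace = 0 ∧
      (U ⊗ₖ (1 : Matrix (Fin d) (Fin d) ℂ)) * ρ * (U ⊗ₖ (1 : Matrix (Fin d) (Fin d) ℂ))ᴴ = ρ := by
  set P : Fin 2 → Matrix (Fin 2) (Fin 2) ℂ := fun i => vecMulVec (v i) (star (v i)) with hP
  set U : Matrix (Fin 2) (Fin 2) ℂ := P 0 - P 1 with hU
  have hPmul : ∀ i j, P i * P j = (if i = j then (1:ℂ) else 0) • vecMulVec (v i) (star (v j)) := by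
    intro i j
    rw [hP]
    simp only
    rw [vmv_mul_vmv, horth]
  have hPP : ∀ i, P i * P i = P i := by
    intro i
    rw [hPmul]
    simp [hP]
  have hPO : ∀ i j, i ≠ j → P i * P j = 0 := by
    intro i j hij
    rw [hPmul]
    simp [hij]
  have hsum : P 0 + P 1 = 1 := by
    -- resolution of identity
    set W : Matrix (Fin 2) (Fin 2) ℂ := Matrix.of fun p i => v i p with hWdef
    have hW1 : Wᴴ * W = 1 := by
      ext i j
      have := horth i j
      simp only [dotProduct, Pi.star_apply, Fin.sum_univ_two, RCLike.star_def] at this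
      simp [Matrix.mul_apply, Matrix.conjTranspose_apply, Matrix.one_apply, hWdef,
        Fin.sum_univ_two, this]
    have hW2 : W * Wᴴ = 1 := mul_eq_one_comm.mp hW1
    rw [← hW2]
    ext p q
    simp [hP, hWdef, Matrix.mul_apply, Matrix.conjTranspose_apply, vecMulVec_apply,
      Fin.sum_univ_two, Matrix.add_apply]
  have hUH : Uᴴ = U := by rw [hU, conjTranspose_sub, hP]; simp only [vmv_ct]
  have hUU : U * U = 1 := by
    rw [hU, sub_mul, mul_sub, mul_sub, hPP, hPP, hPO 0 1 (by decide), hPO 1 0 (by decide)]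
    rw [← hsum]
    noncomm_ring
  refine ⟨U, by rw [hUH, hUU], ?_, ?_⟩
  · rw [hU, Matrix.trace_sub, hP]
    simp only
    have ht : ∀ i, (vecMulVec (v i) (star (v i))).trace = 1 := by
      intro i
      have h1 := horth i i
      rw [if_pos rfl] at h1
      rw [Matrix.trace]
      simp only [Matrix.diag, vecMulVec_apply]
      rw [← h1]
      simp only [dotProduct, Pi.star_apply]
      exact Finset.sum_congr rfl fun r _ => by ring
    rw [ht, ht]; ring
  · have h0 : U * P 0 = P 0 := by rw [hU, sub_mul, hPP, hPO 1 0 (by decide), sub_zero]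
    have h0' : P 0 * U = P 0 := by rw [hU, mul_sub, hPP, hPO 0 1 (by decide), sub_zero]
    have h1 : U * P 1 = -P 1 := by rw [hU, sub_mul, hPP, hPO 0 1 (by decide), zero_sub]
    have h1' : P 1 * U = -P 1 := by rw [hU, mul_sub, hPP, hPO 1 0 (by decide), zero_sub]
    have hUP : ∀ i, U * P i * U = P i := by
      intro i
      fin_cases i
      · show U * P 0 * U = P 0
        rw [h0, h0']
      · show U * P 1 * U = P 1
        rw [h1, neg_mul, h1', neg_neg]
    rw [kronCT, hUH, conjTranspose_one, hdec, Finset.mul_sum, Finset.sum_mul]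
    refine Finset.sum_congr rfl fun i _ => ?_
    have hPi : vecMulVec (v i) (star (v i)) = P i := rfl
    rw [hPi, ← mul_kronecker_mul, ← mul_kronecker_mul, Matrix.one_mul, Matrix.mul_one, hUP]

lemma res_of_orth (v : Fin 2 → Fin 2 → ℂ)
    (horth : ∀ i j, star (v i) ⬝ᵥ v j = if i = j then 1 else 0) :
    ∀ p q, (∑ i, v i p * star (v i q)) = if p = q then 1 else 0 := by
  set W : Matrix (Fin 2) (Fin 2) ℂ := Matrix.of fun p i => v i p with hW
  have hW1 : Wᴴ * W = 1 := by
    ext i j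
    have := horth i j
    simp only [dotProduct, Pi.star_apply] at this
    simp only [Fin.sum_univ_two, RCLike.star_def] at this
    simp [Matrix.mul_apply, Matrix.conjTranspose_apply, Matrix.one_apply, hW, Fin.sum_univ_two, this]
  have hW2 : W * Wᴴ = 1 := mul_eq_one_comm.mp hW1
  intro p q
  have := congrFun (congrFun hW2 p) q
  simpa [Matrix.mul_apply, Matrix.conjTranspose_apply, Matrix.one_apply, hW] using this

lemma keyCQ (d : ℕ) (ρ : Matrix (Fin 2 × Fin d) (Fin 2 × Fin d) ℂ) (hρ : ρ.PosSemidef)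
    (V : Matrix (Fin 2) (Fin 2) ℂ) (hV : Vᴴ = V)
    (v : Fin 2 → Fin 2 → ℂ) (lam : Fin 2 → ℂ)
    (horth : ∀ i j, star (v i) ⬝ᵥ v j = if i = j then 1 else 0)
    (heig : ∀ i, V.mulVec (v i) = lam i • v i)
    (hlamr : ∀ i, star (lam i) = lam i)
    (hlam : lam 0 ≠ lam 1)
    (hcomm : (V ⊗ₖ (1 : Matrix (Fin d) (Fin d) ℂ)) * ρ = ρ * (V ⊗ₖ (1 : Matrix (Fin d) (Fin d) ℂ))) :
    IsClassicalQuantum d ρ := by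
  -- per-(k,l) 2×2 blocks of ρ
  set R : Fin d → Fin d → Matrix (Fin 2) (Fin 2) ℂ :=
    fun k l => Matrix.of fun p q => ρ (p,k) (q,l) with hRdef
  have hRcomm : ∀ k l, V * R k l = R k l * V := by
    intro k l
    ext p q
    have := congrFun (congrFun hcomm (p,k)) (q,l)
    simp only [Matrix.mul_apply, Fintype.sum_prod_type, Matrix.kroneckerMap_apply,
      Matrix.one_apply, mul_ite, mul_one, mul_zero, ite_mul, one_mul, zero_mul,
      Finset.sum_ite_eq, Finset.sum_ite_eq', Finset.mem_univ, if_true] at this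
    simpa [Matrix.mul_apply, hRdef] using this
  -- matrix elements
  have hME : ∀ i j k l, lam i * (star (v i) ⬝ᵥ (R k l).mulVec (v j))
      = lam j * (star (v i) ⬝ᵥ (R k l).mulVec (v j)) := by
    intro i j k l
    have hvm : (star (v i)) ᵥ* V = lam i • star (v i) := by
      have h1 : star (V.mulVec (v i)) = (star (v i)) ᵥ* Vᴴ := Matrix.star_mulVec V (v i)
      rw [hV, heig i, star_smul, hlamr i] at h1
      exact h1.symm
    calc lam i * (star (v i) ⬝ᵥ (R k l).mulVec (v j))
        = (lam i • star (v i)) ⬝ᵥ (R k l).mulVec (v j) := by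
          rw [smul_dotProduct, smul_eq_mul]
      _ = ((star (v i)) ᵥ* V) ⬝ᵥ (R k l).mulVec (v j) := by rw [hvm]
      _ = star (v i) ⬝ᵥ (V * R k l).mulVec (v j) := by
          rw [Matrix.dotProduct_mulVec, Matrix.dotProduct_mulVec, Matrix.vecMul_vecMul]
      _ = star (v i) ⬝ᵥ (R k l * V).mulVec (v j) := by rw [hRcomm]
      _ = star (v i) ⬝ᵥ (R k l).mulVec (V.mulVec (v j)) := by rw [Matrix.mulVec_mulVec]
      _ = star (v i) ⬝ᵥ (R k l).mulVec (lam j • v j) := by rw [heig j]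
      _ = lam j * (star (v i) ⬝ᵥ (R k l).mulVec (v j)) := by
          rw [Matrix.mulVec_smul, dotProduct_smul, smul_eq_mul]
  have hMoff : ∀ (i j : Fin 2) k l, i ≠ j → star (v i) ⬝ᵥ (R k l).mulVec (v j) = 0 := by
    intro i j k l hij
    have h := hME i j k l
    have h2 : (lam i - lam j) * (star (v i) ⬝ᵥ (R k l).mulVec (v j)) = 0 := by
      linear_combination h
    rcases mul_eq_zero.mp h2 with h' | h'
    · exfalso
      have : lam i = lam j := sub_eq_zero.mp h'
      fin_cases i <;> fin_cases j <;> simp_all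
    · exact h'
  set W : Matrix (Fin 2) (Fin 2) ℂ := Matrix.of fun p i => v i p with hWdef
  have hW1 : Wᴴ * W = 1 := by
    ext i j
    have := horth i j
    simp only [dotProduct, Pi.star_apply, Fin.sum_univ_two, RCLike.star_def] at this
    simp [Matrix.mul_apply, Matrix.conjTranspose_apply, Matrix.one_apply, hWdef,
      Fin.sum_univ_two, this]
  have hW2 : W * Wᴴ = 1 := mul_eq_one_comm.mp hW1
  have hNij : ∀ k l i j, (Wᴴ * R k l * W) i j = star (v i) ⬝ᵥ (R k l).mulVec (v j) := by
    intro k l i j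
    simp only [Matrix.mul_apply, Matrix.conjTranspose_apply, dotProduct, Matrix.mulVec,
      Matrix.of_apply, hWdef, Pi.star_apply, Finset.sum_mul, Finset.mul_sum]
    rw [Finset.sum_comm]
    exact Finset.sum_congr rfl fun p _ => Finset.sum_congr rfl fun q _ => by ring
  refine ⟨v, fun i => Matrix.of fun k l => star (v i) ⬝ᵥ (R k l).mulVec (v i), horth, ?_, ?_⟩
  · intro i
    show (Matrix.of fun k l => star (v i) ⬝ᵥ (R k l).mulVec (v i)).PosSemidef
    set B : Matrix (Fin 2 × Fin d) (Fin d) ℂ :=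
      Matrix.of fun x l => v i x.1 * (if x.2 = l then 1 else 0) with hBdef
    have hLB : (Matrix.of fun k l => star (v i) ⬝ᵥ (R k l).mulVec (v i)) = Bᴴ * ρ * B := by
      ext k l
      have hrhs : (Bᴴ * ρ * B) k l = ∑ p, star (v i p) * ∑ q, ρ (p,k) (q,l) * v i q := by
        rw [Matrix.mul_assoc, Matrix.mul_apply, Fintype.sum_prod_type]
        refine Finset.sum_congr rfl fun p _ => ?_
        rw [Finset.mul_sum]
        simp only [Matrix.conjTranspose_apply, Matrix.of_apply, Matrix.mul_apply, hBdef,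
          Fintype.sum_prod_type, star_mul', apply_ite (star : ℂ → ℂ), star_one, star_zero,
          mul_ite, mul_one, mul_zero, ite_mul, zero_mul,
          Finset.sum_ite_eq, Finset.sum_ite_eq', Finset.mem_univ, if_true, Finset.mul_sum]
        rw [Finset.sum_comm]
        simp
      rw [hrhs]
      simp only [Matrix.of_apply, dotProduct, Matrix.mulVec, Pi.star_apply, hRdef]
    rw [hLB]
    exact hρ.conjTranspose_mul_mul_same B
  · ext ⟨p, k⟩ ⟨q, l⟩
    have hent : ρ (p, k) (q, l) = (W * (Wᴴ * R k l * W) * Wᴴ) p q := by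
      have hN : W * (Wᴴ * R k l * W) * Wᴴ = R k l := by
        have e : W * (Wᴴ * R k l * W) * Wᴴ = (W * Wᴴ) * R k l * (W * Wᴴ) := by
          simp only [Matrix.mul_assoc]
        rw [e, hW2, Matrix.one_mul, Matrix.mul_one]
      rw [hN]
      simp [hRdef]
    rw [Matrix.sum_apply, hent]
    have expand : (W * (Wᴴ * R k l * W) * Wᴴ) p q
        = ∑ i : Fin 2, ∑ j : Fin 2, v i p * (Wᴴ * R k l * W) i j * star (v j q) := by
      simp only [Matrix.mul_apply, Matrix.conjTranspose_apply, hWdef, Matrix.of_apply,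
        Pi.star_apply, Finset.sum_mul, Finset.mul_sum]
      rw [Finset.sum_comm]
    rw [expand]
    simp only [Fin.sum_univ_two, hNij, hMoff 0 1 k l (by decide), hMoff 1 0 k l (by decide),
      Matrix.kroneckerMap_apply, Matrix.vecMulVec_apply, Matrix.of_apply, Pi.star_apply,
      mul_zero, zero_mul, add_zero, zero_add]
    ring

lemma reduce_to_involution {d : ℕ} (ρ : Matrix (Fin 2 × Fin d) (Fin 2 × Fin d) ℂ)
    (U : Matrix (Fin 2) (Fin 2) ℂ) (hU : Uᴴ * U = 1) (htrU : U.trace = 0)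
    (hinv : (U ⊗ₖ (1 : Matrix (Fin d) (Fin d) ℂ)) * ρ * (U ⊗ₖ (1 : Matrix (Fin d) (Fin d) ℂ))ᴴ = ρ) :
    ∃ V : Matrix (Fin 2) (Fin 2) ℂ, Vᴴ = V ∧ V * V = 1 ∧ V.trace = 0 ∧
      (V ⊗ₖ (1 : Matrix (Fin d) (Fin d) ℂ)) * ρ = ρ * (V ⊗ₖ (1 : Matrix (Fin d) (Fin d) ℂ)) := by
  have h11 : U 1 1 = -(U 0 0) := by
    have h := htrU
    rw [Matrix.trace_fin_two] at h
    linear_combination h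
  -- Cayley-Hamilton
  have hCH : U * U = (-U.det) • (1 : Matrix (Fin 2) (Fin 2) ℂ) := by
    ext i j
    fin_cases i <;> fin_cases j <;>
      simp [Matrix.mul_apply, Fin.sum_univ_two, Matrix.det_fin_two, Matrix.one_apply,
        h11, smul_eq_mul] <;> ring
  have hdet : star U.det * U.det = 1 := by
    have := congrArg Matrix.det hU
    rwa [Matrix.det_mul, Matrix.det_conjTranspose, Matrix.det_one] at this
  obtain ⟨c, hc2⟩ := IsAlgClosed.exists_pow_nat_eq (-U.det) (n := 2) (by norm_num)
  have hcc : star c * c = 1 := by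
    have h1 : (star c * c) ^ 2 = 1 := by
      have : (star c * c) ^ 2 = star (c ^ 2) * c ^ 2 := by ring_nf; rw [← star_pow]; ring
      rw [this, hc2, star_neg, neg_mul_neg, hdet]
    have h2 : ((Complex.normSq c : ℝ) : ℂ) ^ 2 = 1 := by
      rw [Complex.star_def, ← Complex.normSq_eq_conj_mul_self] at h1
      exact h1
    have h3 : (Complex.normSq c) ^ 2 = 1 := by exact_mod_cast h2
    have h4 : Complex.normSq c = 1 := by nlinarith [Complex.normSq_nonneg c]
    rw [Complex.star_def, ← Complex.normSq_eq_conj_mul_self, h4, Complex.ofReal_one]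
  have hc0 : c ≠ 0 := by
    intro h
    rw [h, mul_zero] at hcc
    exact zero_ne_one hcc
  have hsc : star c = c⁻¹ := eq_inv_of_mul_eq_one_left hcc
  have hVV : (c⁻¹ • U) * (c⁻¹ • U) = 1 := by
    rw [Matrix.smul_mul, Matrix.mul_smul, hCH, ← hc2, smul_smul, smul_smul]
    rw [show c⁻¹ * c⁻¹ * c ^ 2 = 1 by field_simp, one_smul]
  have hVhV : (c⁻¹ • U)ᴴ * (c⁻¹ • U) = 1 := by
    rw [Matrix.conjTranspose_smul, Matrix.smul_mul, Matrix.mul_smul, hU, smul_smul]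
    rw [star_inv₀, hsc, inv_inv, mul_inv_cancel₀ hc0, one_smul]
  have hVh : (c⁻¹ • U)ᴴ = c⁻¹ • U := by
    conv_lhs => rw [← Matrix.mul_one ((c⁻¹ • U)ᴴ), ← hVV]
    rw [← Matrix.mul_assoc, hVhV, Matrix.one_mul]
  refine ⟨c⁻¹ • U, hVh, hVV, ?_, ?_⟩
  · rw [Matrix.trace_smul, htrU, smul_zero]
  · have hK : (c⁻¹ • U) ⊗ₖ (1 : Matrix (Fin d) (Fin d) ℂ) = c⁻¹ • (U ⊗ₖ (1 : Matrix (Fin d) (Fin d) ℂ)) :=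
      Matrix.smul_kronecker c⁻¹ U 1
    have hinv' : ((c⁻¹ • U) ⊗ₖ (1 : Matrix (Fin d) (Fin d) ℂ)) * ρ *
        ((c⁻¹ • U) ⊗ₖ (1 : Matrix (Fin d) (Fin d) ℂ))ᴴ = ρ := by
      rw [hK, Matrix.conjTranspose_smul, Matrix.smul_mul, Matrix.smul_mul, Matrix.mul_smul,
        smul_smul, star_inv₀, hsc, inv_inv, inv_mul_cancel₀ hc0, one_smul]
      exact hinv
    set X := (c⁻¹ • U) ⊗ₖ (1 : Matrix (Fin d) (Fin d) ℂ) with hX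
    have hXh : Xᴴ = X := by rw [hX, kronCT, hVh, Matrix.conjTranspose_one]
    have hXX : X * X = 1 := by
      rw [hX, ← Matrix.mul_kronecker_mul, hVV, Matrix.one_mul, Matrix.one_kronecker_one]
    rw [hXh] at hinv'
    have := congrArg (· * X) hinv'
    simpa only [Matrix.mul_assoc, hXX, Matrix.mul_one] using this

lemma eigen_of_involution (V : Matrix (Fin 2) (Fin 2) ℂ) (hV : Vᴴ = V)
    (hVV : V * V = 1) (htr : V.trace = 0) :
    ∃ (v : Fin 2 → Fin 2 → ℂ) (lam : Fin 2 → ℂ),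
      (∀ i j, star (v i) ⬝ᵥ v j = if i = j then 1 else 0) ∧
      (∀ i, V.mulVec (v i) = lam i • v i) ∧
      (∀ i, star (lam i) = lam i) ∧ lam 0 ≠ lam 1 := by
  set a := V 0 0 with hadef
  set b := V 0 1 with hbdef
  have ha : star a = a := by
    have := congrFun (congrFun hV 0) 0
    simpa [Matrix.conjTranspose_apply] using this
  have hb' : V 1 0 = star b := by
    have := congrFun (congrFun hV 1) 0
    simpa [Matrix.conjTranspose_apply] using this.symm
  have h11 : V 1 1 = -a := by
    have h := htr
    rw [Matrix.trace_fin_two] at h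
    linear_combination h
  have hb2 : a * a + b * star b = 1 := by
    have := congrFun (congrFun hVV 0) 0
    simpa [Matrix.mul_apply, Fin.sum_univ_two, Matrix.one_apply, hb', ← hadef, ← hbdef]
      using this
  by_cases hca : (1 : ℂ) + a = 0
  · -- a = -1, b = 0
    have ha1 : a = -1 := by linear_combination hca
    have hb0 : b = 0 := by
      have : b * star b = 0 := by rw [ha1] at hb2; linear_combination hb2
      rcases mul_eq_zero.mp this with h | h
      · exact h
      · simpa using congrArg star h
    refine ⟨![![0,1], ![1,0]], ![1,-1], ?_, ?_, ?_, by norm_num⟩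
    · intro i j
      fin_cases i <;> fin_cases j <;>
        simp [dotProduct, Fin.sum_univ_two]
    · intro i
      fin_cases i <;> ext p <;> fin_cases p <;>
        simp [Matrix.mulVec, dotProduct, Fin.sum_univ_two, ← hadef, ← hbdef, hb', h11,
          ha1, hb0]
    · intro i
      fin_cases i <;> simp
  · -- generic case
    have haim : (a.re : ℂ) = a := by
      rw [Complex.star_def, Complex.conj_eq_iff_re] at ha
      exact ha
    have hnb : Complex.normSq b = 1 - a.re ^ 2 := by
      have hcast : ((Complex.normSq b : ℝ) : ℂ) = ((1 - a.re ^ 2 : ℝ) : ℂ) := by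
        push_cast
        rw [haim, Complex.star_def] at *
        rw [← Complex.mul_conj]
        linear_combination hb2
      exact_mod_cast hcast
    have har1 : -1 ≤ a.re := by nlinarith [Complex.normSq_nonneg b]
    have harne : a.re ≠ -1 := by
      intro h
      apply hca
      rw [← haim, h]
      norm_num
    have harpos : 0 < 1 + a.re := by
      rcases lt_or_eq_of_le har1 with h | h
      · linarith
      · exact absurd h.symm harne
    set s : ℝ := Real.sqrt (2 * (1 + a.re)) with hsdef
    have hs2 : s ^ 2 = 2 * (1 + a.re) := Real.sq_sqrt (by linarith)
    have hs0 : s ≠ 0 := by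
      intro h
      rw [h] at hs2
      simp at hs2
      linarith
    set t : ℂ := ((s : ℂ))⁻¹ with htdef
    have hsc0 : (s : ℂ) ≠ 0 := by exact_mod_cast hs0
    have ht0 : t ≠ 0 := inv_ne_zero hsc0
    have hst : star t = t := by
      rw [htdef, Complex.star_def, map_inv₀, Complex.conj_ofReal]
    have hsq : ((s : ℂ)) ^ 2 = 2 * (1 + a) := by
      rw [show ((s : ℂ)) ^ 2 = ((s ^ 2 : ℝ) : ℂ) by push_cast; ring, hs2]
      push_cast
      rw [haim]
    have hu : t * t * (2 * (1 + a)) = 1 := by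
      rw [← hsq, htdef]
      field_simp
    have hb2' : b * (starRingEnd ℂ) b = 1 - a * a := by
      rw [← Complex.star_def]
      linear_combination hb2
    have hb2s : b * star b = 1 - a * a := by linear_combination hb2
    refine ⟨![![t * (1 + a), t * star b], ![-(t * b), t * (1 + a)]], ![1, -1],
      ?_, ?_, ?_, by norm_num⟩
    · intro i j
      fin_cases i <;> fin_cases j <;>
        · simp only [Fin.zero_eta, Fin.mk_one, dotProduct, Fin.sum_univ_two, Pi.star_apply,
            Matrix.cons_val_zero, Matrix.cons_val_one, Matrix.head_cons, star_mul', star_add,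
            star_one, star_neg, star_star, hst, ha]
          norm_num
          try ring
          try linear_combination hu + t * t * hb2'
    · intro i
      fin_cases i <;> ext p <;> fin_cases p <;>
        · simp only [Fin.zero_eta, Fin.mk_one, Matrix.mulVec, dotProduct, Fin.sum_univ_two,
            Matrix.cons_val_zero, Matrix.cons_val_one, Matrix.head_cons, Pi.smul_apply,
            smul_eq_mul, ← hadef, ← hbdef, hb', h11]
          try ring
          try linear_combination t * hb2s
          try linear_combination -(t * hb2s)
    · intro i
      fin_cases i <;> simp


theorem invariant_under_traceless_local_unitary_iff_classicalQuantum
    (d : ℕ) (hd : 0 < d)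
    (ρ : Matrix (Fin 2 × Fin d) (Fin 2 × Fin d) ℂ)
    (hρ : ρ.PosSemidef) (htr : ρ.trace = 1) :
    (∃ U : Matrix (Fin 2) (Fin 2) ℂ, Uᴴ * U = 1 ∧ U.trace = 0 ∧
        (U ⊗ₖ (1 : Matrix (Fin d) (Fin d) ℂ)) * ρ * (U ⊗ₖ (1 : Matrix (Fin d) (Fin d) ℂ))ᴴ = ρ)
      ↔ IsClassicalQuantum d ρ := by
  constructor
  · rintro ⟨U, hU, htrU, hinv⟩
    obtain ⟨V, hVh, hVV, htrV, hcomm⟩ := reduce_to_involution ρ U hU htrU hinv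
    obtain ⟨v, lam, horth, heig, hlamr, hlam⟩ := eigen_of_involution V hVh hVV htrV
    exact keyCQ d ρ hρ V hVh v lam horth heig hlamr hlam hcomm
  · rintro ⟨v, L, horth, hLpsd, hdec⟩
    exact backward_dir d ρ v L horth hdec
end

section
/- Let γ = (γ_1, γ_2, γ_3, γ_4) with γ_i ≥ 0 and γ_1 + γ_2 + γ_3 + γ_4 = 1, let ρ_γ be the associated Bell-diagonal two-qubit state, and let σ_z = diag(1, −1). Then √F(ρ_γ, (σ_z ⊗ₖ I_2) ρ_γ (σ_z ⊗ₖ I_2)) = 2(√(γ_1 γ_2) + √(γ_3 γ_4)). -/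
open Matrix Kronecker
open scoped ComplexOrder

open scoped Classical in
/-- The positive semidefinite square root of a matrix (junk value `0` if not PSD). -/
noncomputable def msqrt {n : Type*} [Fintype n] [DecidableEq n] (A : Matrix n n ℂ) : Matrix n n ℂ :=
  if h : A.PosSemidef then
    (h.1.eigenvectorUnitary : Matrix n n ℂ) * diagonal (((↑) : ℝ → ℂ) ∘ Real.sqrt ∘ h.1.eigenvalues) *
      (star h.1.eigenvectorUnitary : Matrix n n ℂ)
  else 0

/-- Square-root fidelity `tr √(√ρ · σ · √ρ)` (as a real number). -/
noncomputable def sqrtFid {n : Type*} [Fintype n] [DecidableEq n] (ρ σ : Matrix n n ℂ) : ℝ :=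
  ((msqrt (msqrt ρ * σ * msqrt ρ)).trace).re

/-- Trace norm `tr √(Xᴴ X)` (as a real number). -/
noncomputable def traceNorm {n : Type*} [Fintype n] [DecidableEq n] (X : Matrix n n ℂ) : ℝ :=
  ((msqrt (Xᴴ * X)).trace).re

/-- The Bell-diagonal two-qubit state with Bell-basis eigenvalues `γ₁, γ₂, γ₃, γ₄`. -/
noncomputable def bellDiag (γ₁ γ₂ γ₃ γ₄ : ℝ) :
    Matrix (Fin 2 × Fin 2) (Fin 2 × Fin 2) ℂ :=
  Matrix.reindex finProdFinEquiv.symm finProdFinEquiv.symm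
    ((1 / 2 : ℂ) • !![(γ₁ : ℂ) + γ₂, 0, 0, (γ₁ : ℂ) - γ₂;
        0, (γ₃ : ℂ) + γ₄, (γ₃ : ℂ) - γ₄, 0;
        0, (γ₃ : ℂ) - γ₄, (γ₃ : ℂ) + γ₄, 0;
        (γ₁ : ℂ) - γ₂, 0, 0, (γ₁ : ℂ) + γ₂])

set_option maxHeartbeats 2000000

/-- The inner `4 × 4` Bell-diagonal matrix. -/
noncomputable def Binner (a b c d : ℝ) : Matrix (Fin 4) (Fin 4) ℂ :=
  (1 / 2 : ℂ) • !![(a : ℂ) + b, 0, 0, (a : ℂ) - b;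
      0, (c : ℂ) + d, (c : ℂ) - d, 0;
      0, (c : ℂ) - d, (c : ℂ) + d, 0;
      (a : ℂ) - b, 0, 0, (a : ℂ) + b]

lemma Binner_mul (a b c d a' b' c' d' : ℝ) :
    Binner a b c d * Binner a' b' c' d' = Binner (a*a') (b*b') (c*c') (d*d') := by
  ext i j
  fin_cases i <;> fin_cases j <;>
    simp [Binner, Matrix.mul_apply, Fin.sum_univ_four] <;> push_cast <;> ring

/-- The (unnormalized) Bell basis change matrix. -/
noncomputable def Vbell : Matrix (Fin 4) (Fin 4) ℂ :=
  !![1, 1, 0, 0; 0, 0, 1, 1; 0, 0, 1, -1; 1, -1, 0, 0]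

lemma Binner_decomp (a b c d : ℝ) :
    Binner a b c d
      = Vbell * Matrix.diagonal ![((a/2 : ℝ) : ℂ), ((b/2 : ℝ) : ℂ), ((c/2 : ℝ) : ℂ),
          ((d/2 : ℝ) : ℂ)] * Vbellᴴ := by
  ext i j
  fin_cases i <;> fin_cases j <;>
    simp [Binner, Vbell, Matrix.mul_apply, Fin.sum_univ_four, Matrix.diagonal_apply,
      Matrix.conjTranspose_apply, Matrix.vecMul, dotProduct] <;> push_cast <;> ring

lemma Binner_posSemidef {a b c d : ℝ} (ha : 0 ≤ a) (hb : 0 ≤ b) (hc : 0 ≤ c) (hd : 0 ≤ d) :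
    (Binner a b c d).PosSemidef := by
  rw [Binner_decomp]
  refine Matrix.PosSemidef.mul_mul_conjTranspose_same ?_ Vbell
  refine Matrix.posSemidef_diagonal_iff.mpr fun i => ?_
  fin_cases i <;> exact Complex.zero_le_real.mpr (by positivity)

open scoped MatrixOrder in
lemma msqrt_of_posSemidef {n : Type*} [Fintype n] [DecidableEq n] {A : Matrix n n ℂ}
    (hA : A.PosSemidef) : msqrt A = CFC.sqrt A := by
  rw [msqrt, dif_pos hA, CFC.sqrt_eq_cfc, cfc_nnreal_eq_real _ A hA.nonneg, hA.1.cfc_eq,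
    Matrix.IsHermitian.cfc, Unitary.conjStarAlgAut_apply]
  congr 3
  funext i
  simp only [Function.comp_apply, Real.coe_sqrt, Real.coe_toNNReal _ (hA.eigenvalues_nonneg i)]
  rfl

lemma msqrt_of_not_posSemidef {n : Type*} [Fintype n] [DecidableEq n] {A : Matrix n n ℂ}
    (hA : ¬ A.PosSemidef) : msqrt A = 0 := dif_neg hA

open scoped MatrixOrder in
lemma msqrt_eq {n : Type*} [Fintype n] [DecidableEq n] {A B : Matrix n n ℂ}
    (hA : A.PosSemidef) (hB : B.PosSemidef) (h : B * B = A) : msqrt A = B := by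
  rw [msqrt_of_posSemidef hA]
  exact CFC.sqrt_unique h hB.nonneg

open scoped MatrixOrder in
lemma msqrt_submatrix {m n : Type*} [Fintype m] [DecidableEq m] [Fintype n] [DecidableEq n]
    (A : Matrix n n ℂ) (e : m ≃ n) :
    msqrt (A.submatrix e e) = (msqrt A).submatrix e e := by
  by_cases hA : A.PosSemidef
  · have hs : (msqrt A).PosSemidef := by
      rw [msqrt_of_posSemidef hA]; exact (CFC.sqrt_nonneg A).posSemidef
    have hm : msqrt A * msqrt A = A := by
      rw [msqrt_of_posSemidef hA]; exact CFC.sqrt_mul_sqrt_self A hA.nonneg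
    refine msqrt_eq (hA.submatrix e) (hs.submatrix e) ?_
    rw [Matrix.submatrix_mul_equiv, hm]
  · rw [msqrt_of_not_posSemidef hA,
      msqrt_of_not_posSemidef (fun h => hA ((Matrix.posSemidef_submatrix_equiv e).mp h))]
    simp

lemma msqrt_Binner {a b c d : ℝ} (ha : 0 ≤ a) (hb : 0 ≤ b) (hc : 0 ≤ c) (hd : 0 ≤ d) :
    msqrt (Binner a b c d) = Binner (Real.sqrt a) (Real.sqrt b) (Real.sqrt c) (Real.sqrt d) := by
  refine msqrt_eq (Binner_posSemidef ha hb hc hd)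
    (Binner_posSemidef (Real.sqrt_nonneg a) (Real.sqrt_nonneg b) (Real.sqrt_nonneg c)
      (Real.sqrt_nonneg d)) ?_
  rw [Binner_mul, Real.mul_self_sqrt ha, Real.mul_self_sqrt hb, Real.mul_self_sqrt hc,
    Real.mul_self_sqrt hd]

lemma bellDiag_eq (γ₁ γ₂ γ₃ γ₄ : ℝ) :
    bellDiag γ₁ γ₂ γ₃ γ₄ = (Binner γ₁ γ₂ γ₃ γ₄).submatrix finProdFinEquiv finProdFinEquiv :=
  rfl

lemma sigma_eq (γ₁ γ₂ γ₃ γ₄ : ℝ) :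
    (!![1, 0; 0, -1] ⊗ₖ (1 : Matrix (Fin 2) (Fin 2) ℂ)) * bellDiag γ₁ γ₂ γ₃ γ₄ *
        (!![1, 0; 0, -1] ⊗ₖ (1 : Matrix (Fin 2) (Fin 2) ℂ))
      = bellDiag γ₂ γ₁ γ₄ γ₃ := by
  ext ⟨i, j⟩ ⟨k, l⟩
  fin_cases i <;> fin_cases j <;> fin_cases k <;> fin_cases l <;>
    simp [bellDiag, Matrix.mul_apply, Fintype.sum_prod_type, Fin.sum_univ_two,
      Matrix.one_apply, finProdFinEquiv, Matrix.kroneckerMap_apply] <;> ring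

lemma trace_submatrix_equiv' {m n : Type*} [Fintype m] [Fintype n]
    (A : Matrix n n ℂ) (e : m ≃ n) : (A.submatrix e e).trace = A.trace := by
  simp only [Matrix.trace, Matrix.diag, Matrix.submatrix_apply]
  exact Equiv.sum_comp e fun i => A i i

lemma Binner_trace_re (a b c d : ℝ) :
    ((Binner a b c d).trace).re = a + b + c + d := by
  simp [Binner, Matrix.trace, Matrix.diag, Fin.sum_univ_four]
  ring

theorem sqrtFidelity_bellDiagonal_sigmaZ
    (γ₁ γ₂ γ₃ γ₄ : ℝ) (h1 : 0 ≤ γ₁) (h2 : 0 ≤ γ₂) (h3 : 0 ≤ γ₃) (h4 : 0 ≤ γ₄)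
    (hsum : γ₁ + γ₂ + γ₃ + γ₄ = 1) :
    sqrtFid (bellDiag γ₁ γ₂ γ₃ γ₄)
        ((!![1, 0; 0, -1] ⊗ₖ (1 : Matrix (Fin 2) (Fin 2) ℂ)) * bellDiag γ₁ γ₂ γ₃ γ₄ *
          (!![1, 0; 0, -1] ⊗ₖ (1 : Matrix (Fin 2) (Fin 2) ℂ)))
      = 2 * (Real.sqrt (γ₁ * γ₂) + Real.sqrt (γ₃ * γ₄)) := by
  have h12 : 0 ≤ γ₁ * γ₂ := mul_nonneg h1 h2
  have h34 : 0 ≤ γ₃ * γ₄ := mul_nonneg h3 h4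
  set e := (finProdFinEquiv : Fin 2 × Fin 2 ≃ Fin 4) with he
  rw [sqrtFid, sigma_eq, bellDiag_eq γ₁ γ₂ γ₃ γ₄, bellDiag_eq γ₂ γ₁ γ₄ γ₃, ← he,
    msqrt_submatrix, msqrt_Binner h1 h2 h3 h4, Matrix.submatrix_mul_equiv,
    Matrix.submatrix_mul_equiv, Binner_mul, Binner_mul, msqrt_submatrix]
  have hprod : Real.sqrt γ₁ * γ₂ * Real.sqrt γ₁ = γ₁ * γ₂ := by
    rw [mul_comm, ← mul_assoc, Real.mul_self_sqrt h1]
  have hprod2 : Real.sqrt γ₂ * γ₁ * Real.sqrt γ₂ = γ₁ * γ₂ := by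
    rw [mul_comm, ← mul_assoc, Real.mul_self_sqrt h2, mul_comm]
  have hprod3 : Real.sqrt γ₃ * γ₄ * Real.sqrt γ₃ = γ₃ * γ₄ := by
    rw [mul_comm, ← mul_assoc, Real.mul_self_sqrt h3]
  have hprod4 : Real.sqrt γ₄ * γ₃ * Real.sqrt γ₄ = γ₃ * γ₄ := by
    rw [mul_comm, ← mul_assoc, Real.mul_self_sqrt h4, mul_comm]
  have hkey : msqrt (Binner (γ₁*γ₂) (γ₁*γ₂) (γ₃*γ₄) (γ₃*γ₄))
      = Binner (Real.sqrt (γ₁*γ₂)) (Real.sqrt (γ₁*γ₂)) (Real.sqrt (γ₃*γ₄))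
          (Real.sqrt (γ₃*γ₄)) :=
    msqrt_eq (Binner_posSemidef h12 h12 h34 h34)
      (Binner_posSemidef (Real.sqrt_nonneg _) (Real.sqrt_nonneg _) (Real.sqrt_nonneg _)
        (Real.sqrt_nonneg _))
      (by rw [Binner_mul, Real.mul_self_sqrt h12, Real.mul_self_sqrt h34])
  rw [hprod, hprod2, hprod3, hprod4, hkey, trace_submatrix_equiv', Binner_trace_re]
  ring
end

section
/- Let d be a positive natural number and let φ be a unit vector in ℂ² ⊗ ℂ^d. Then there exists a traceless 2 × 2 unitary matrix U with |⟨φ, (U ⊗ₖ I_d) φ⟩| = 1 if and only if φ is a product vector, i.e., there exist a ∈ ℂ² and b ∈ ℂ^d with φ = a ⊗ₖ b. Equivalently, the entanglement of response E_R(φ) = 1 − max over traceless 2 × 2 unitaries U of |⟨φ, (U ⊗ₖ I_d)φ⟩|² vanishes exactly on product (fully separable) pure states. -/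
open Matrix Kronecker

set_option maxHeartbeats 1000000

private lemma star_dot_self_eq_zero {n : Type*} [Fintype n] {v : n → ℂ}
    (h : star v ⬝ᵥ v = 0) : v = 0 := by
  have h1 : ((∑ p, Complex.normSq (v p) : ℝ) : ℂ) = 0 := by
    rw [← h, dotProduct]
    push_cast
    apply Finset.sum_congr rfl
    intro p _
    rw [Pi.star_apply, Complex.star_def, mul_comm, Complex.mul_conj]
  have h2 : ∑ p, Complex.normSq (v p) = 0 := by exact_mod_cast h1
  funext i
  have h3 := (Finset.sum_eq_zero_iff_of_nonneg
    (fun p _ => Complex.normSq_nonneg (v p))).mp h2 i (Finset.mem_univ i)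
  simpa using Complex.normSq_eq_zero.mp h3

private lemma aux_row {d : ℕ} (r : Fin 2 → ℂ) (hr : r 0 ≠ 0 ∨ r 1 ≠ 0)
    (φ : Fin 2 × Fin d → ℂ) (h : ∀ j, r 0 * φ (0, j) + r 1 * φ (1, j) = 0) :
    ∃ (a : Fin 2 → ℂ) (b : Fin d → ℂ), φ = fun p => a p.1 * b p.2 := by
  rcases hr with h0 | h1
  · refine ⟨![r 1, -r 0], fun j => -φ (1, j) / r 0, ?_⟩
    funext p
    obtain ⟨i, j⟩ := p
    fin_cases i <;> simp only [Fin.zero_eta, Fin.mk_one, Fin.isValue, Matrix.cons_val_zero, Matrix.cons_val_one, Matrix.head_cons]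
    · field_simp
      linear_combination h j
    · field_simp
  · refine ⟨![r 1, -r 0], fun j => φ (0, j) / r 1, ?_⟩
    funext p
    obtain ⟨i, j⟩ := p
    fin_cases i <;> simp only [Fin.zero_eta, Fin.mk_one, Fin.isValue, Matrix.cons_val_zero, Matrix.cons_val_one, Matrix.head_cons]
    · field_simp
    · field_simp
      linear_combination h j

theorem entanglement_of_response_vanishes_iff_product
    (d : ℕ) (hd : 0 < d) (φ : Fin 2 × Fin d → ℂ) (hφ : star φ ⬝ᵥ φ = 1) :
    (∃ U : Matrix (Fin 2) (Fin 2) ℂ, Uᴴ * U = 1 ∧ U.trace = 0 ∧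
        ‖star φ ⬝ᵥ (U ⊗ₖ (1 : Matrix (Fin d) (Fin d) ℂ)).mulVec φ‖ = 1)
      ↔ ∃ (a : Fin 2 → ℂ) (b : Fin d → ℂ), φ = fun p => a p.1 * b p.2 := by
  constructor
  · rintro ⟨U, hU, htr, habs⟩
    set M : Matrix (Fin 2 × Fin d) (Fin 2 × Fin d) ℂ := U ⊗ₖ (1 : Matrix (Fin d) (Fin d) ℂ) with hM
    set ψ := M.mulVec φ with hψ
    have hMM : Mᴴ * M = 1 := by
      have h1 : Mᴴ = Uᴴ ⊗ₖ (1 : Matrix (Fin d) (Fin d) ℂ) := by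
        ext ⟨i, j⟩ ⟨k, l⟩
        simp only [hM, Matrix.conjTranspose_apply, Matrix.kroneckerMap_apply, Matrix.one_apply,
          apply_ite (star : ℂ → ℂ), star_one, star_zero, star_mul', mul_comm]
        rcases eq_or_ne j l with h | h
        · simp [h]
        · simp [h, Ne.symm h]
      rw [h1, hM, ← Matrix.mul_kronecker_mul, hU, Matrix.one_mul, Matrix.one_kronecker_one]
    have hψψ : star ψ ⬝ᵥ ψ = 1 := by
      rw [hψ, Matrix.star_mulVec, Matrix.dotProduct_mulVec, Matrix.vecMul_vecMul, hMM,
        Matrix.vecMul_one, hφ]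
    set c := star φ ⬝ᵥ ψ with hc
    have hcc : star c * c = 1 := by
      rw [Complex.star_def, mul_comm, Complex.mul_conj, Complex.normSq_eq_norm_sq, habs]
      norm_num
    have hc0 : c ≠ 0 := by
      intro h
      rw [h, mul_zero] at hcc
      exact one_ne_zero hcc.symm
    have hψφ : star ψ ⬝ᵥ φ = star c := by
      rw [Matrix.star_dotProduct, ← hc]
    have hψc : ψ = c • φ := by
      have h0 : star (ψ - c • φ) ⬝ᵥ (ψ - c • φ) = 0 := by
        simp only [star_sub, star_smul, sub_dotProduct, dotProduct_sub,
          smul_dotProduct, dotProduct_smul, hψψ, hφ, hψφ, ← hc, smul_eq_mul]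
        linear_combination -hcc
      exact sub_eq_zero.mp (star_dot_self_eq_zero h0)
    have key : ∀ (i : Fin 2) (j : Fin d), U i 0 * φ (0, j) + U i 1 * φ (1, j) = c * φ (i, j) := by
      intro i j
      have h1 := congrFun hψc (i, j)
      rw [hψ] at h1
      simp only [Pi.smul_apply, smul_eq_mul] at h1
      rw [← h1]
      simp [hM, Matrix.mulVec, dotProduct, Fintype.sum_prod_type, Matrix.one_apply,
        Fin.sum_univ_two, mul_ite, mul_one, mul_zero, Finset.sum_ite_eq]
    by_cases h00 : U 0 0 = c
    · by_cases h11 : U 1 1 = c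
      · exfalso
        have ht2 : U.trace = U 0 0 + U 1 1 := by
          simp [Matrix.trace, Fin.sum_univ_two, Matrix.diag]
        rw [htr, h00, h11] at ht2
        have h2 : (2 : ℂ) * c = 0 := by linear_combination -ht2
        rw [mul_eq_zero] at h2
        exact hc0 (h2.resolve_left two_ne_zero)
      · apply aux_row ![U 1 0, U 1 1 - c] (Or.inr (by simpa using sub_ne_zero.mpr h11)) φ
        intro j
        simp only [Matrix.cons_val_zero, Matrix.cons_val_one, Matrix.head_cons]
        linear_combination key 1 j
    · apply aux_row ![U 0 0 - c, U 0 1] (Or.inl (by simpa using sub_ne_zero.mpr h00)) φ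
      intro j
      simp only [Matrix.cons_val_zero, Matrix.cons_val_one, Matrix.head_cons]
      linear_combination key 0 j
  · rintro ⟨a, b, rfl⟩
    set s : ℂ := star a ⬝ᵥ a with hs
    have hst : s * (star b ⬝ᵥ b) = 1 := by
      rw [hs, ← hφ]
      simp only [dotProduct, Pi.star_apply, Finset.sum_mul_sum]
      rw [Fintype.sum_prod_type]
      apply Finset.sum_congr rfl
      intro i _
      apply Finset.sum_congr rfl
      intro j _
      simp only [star_mul']
      ring
    have hs0 : s ≠ 0 := left_ne_zero_of_mul_eq_one hst
    have hsdef : s = (starRingEnd ℂ) (a 0) * a 0 + (starRingEnd ℂ) (a 1) * a 1 := by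
      rw [hs]
      simp [dotProduct, Fin.sum_univ_two, Complex.star_def]
    have hs0' : (starRingEnd ℂ) (a 0) * a 0 + (starRingEnd ℂ) (a 1) * a 1 ≠ 0 := hsdef ▸ hs0
    have hstar : (starRingEnd ℂ) s = s := by
      rw [hs]
      simp only [dotProduct, map_sum, _root_.map_mul, Pi.star_apply, Complex.star_def,
        Complex.conj_conj]
      exact Finset.sum_congr rfl fun i _ => mul_comm _ _
    set U : Matrix (Fin 2) (Fin 2) ℂ := (2 / s) • Matrix.vecMulVec a (star a) - 1 with hUdef
    have e : ∀ m l : Fin 2, U m l = 2 / s * (a m * (starRingEnd ℂ) (a l)) - if m = l then 1 else 0 := by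
      intro m l
      simp [hUdef, Matrix.vecMulVec_apply, Matrix.one_apply, Matrix.sub_apply,
        Matrix.smul_apply, smul_eq_mul, Complex.star_def]
    refine ⟨U, ?_, ?_, ?_⟩
    · ext i k
      rw [Matrix.mul_apply, Fin.sum_univ_two]
      simp only [Matrix.conjTranspose_apply, e, Matrix.one_apply, Complex.star_def, map_sub,
        _root_.map_mul, map_div₀, Complex.conj_ofNat, Complex.conj_conj,
        apply_ite (starRingEnd ℂ), _root_.map_one, _root_.map_zero, hstar]
      fin_cases i <;> fin_cases k <;>
        simp only [Fin.isValue, if_true, reduceIte, Fin.zero_eta, Fin.mk_one, ite_true,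
          ite_false, one_ne_zero, zero_ne_one, Fin.ext_iff, Fin.val_zero, Fin.val_one]
      · field_simp
        linear_combination (-4 * (starRingEnd ℂ) (a 0) * a 0) * hsdef
      · field_simp
        linear_combination (-4 * a 0 * (starRingEnd ℂ) (a 1)) * hsdef
      · field_simp
        linear_combination (-4 * (starRingEnd ℂ) (a 0) * a 1) * hsdef
      · field_simp
        linear_combination (-4 * (starRingEnd ℂ) (a 1) * a 1) * hsdef
    · have ht2 : U.trace = U 0 0 + U 1 1 := by
        simp [Matrix.trace, Fin.sum_univ_two, Matrix.diag]
      rw [ht2, e, e]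
      simp only [if_true, reduceIte]
      field_simp
      linear_combination (-2 : ℂ) * hsdef
    · have hUa : ∀ i : Fin 2, U i 0 * a 0 + U i 1 * a 1 = a i := by
        intro i
        simp only [e]
        fin_cases i <;>
          simp only [Fin.isValue, if_true, reduceIte, Fin.zero_eta, Fin.mk_one, ite_true,
            ite_false, one_ne_zero, zero_ne_one, Fin.ext_iff, Fin.val_zero, Fin.val_one]
        · field_simp
          linear_combination (-2 * a 0) * hsdef
        · field_simp
          linear_combination (-2 * a 1) * hsdef
      have hfix : (U ⊗ₖ (1 : Matrix (Fin d) (Fin d) ℂ)).mulVec (fun p => a p.1 * b p.2) =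
          (fun p => a p.1 * b p.2) := by
        funext p
        obtain ⟨i, j⟩ := p
        simp only [Matrix.mulVec, dotProduct, Fintype.sum_prod_type,
          Matrix.kroneckerMap_apply, Matrix.one_apply, Fin.sum_univ_two, mul_ite, mul_one,
          mul_zero, ite_mul, zero_mul, Finset.sum_ite_eq, Finset.mem_univ, if_true]
        linear_combination b j * hUa i
      rw [hfix, hφ]
      simp
end
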